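/- The projective conic over Q defined in P² (with coordinates λ, μ, u, where u has weight 1 after dehomogenizing, i.e. the conic u² = 2(λ² + λμ + μ²)) has no rational points; indeed it has no points over Q_2 and no points over Q_3. -/

import Mathlib

section Aux

variable {p : ℕ} [hp : Fact p.Prime]

lemma aux_norm_one {x : ℤ_[p]} (h : PadicInt.toZMod x ≠ 0) : ‖x‖ = 1 := by
  have h1 : ¬ ((p : ℤ_[p]) ∣ x) := by
    intro hd
    apply h
    have : x ∈ RingHom.ker (PadicInt.toZMod : ℤ_[p] →+* ZMod p) := by
      rw [PadicInt.ker_toZMod, PadicInt.maximalIdeal_eq_span_p, Ideal.mem_span_singleton]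
      exact hd
    exact this
  have h2 : ¬ ‖x‖ < 1 := by rw [PadicInt.norm_lt_one_iff_dvd]; exact h1
  exact le_antisymm x.norm_le_one (not_lt.mp h2)

lemma aux_dvd {x : ℤ_[p]} (h : PadicInt.toZMod x = 0) : (p : ℤ_[p]) ∣ x := by
  have : x ∈ RingHom.ker (PadicInt.toZMod : ℤ_[p] →+* ZMod p) := h
  rwa [PadicInt.ker_toZMod, PadicInt.maximalIdeal_eq_span_p, Ideal.mem_span_singleton] at this

lemma aux_parity {w : ℤ_[p]} (h : ‖w‖ ^ 2 = ((p : ℝ))⁻¹) : False := by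
  have hp1 : (1 : ℝ) < p := by exact_mod_cast hp.out.one_lt
  have hw : w ≠ 0 := by
    rintro rfl
    simp at h
    exact absurd h.symm (by positivity)
  rw [PadicInt.norm_eq_zpow_neg_valuation hw] at h
  have : (p : ℝ) ^ (-(w.valuation : ℤ) * 2) = (p : ℝ) ^ (-1 : ℤ) := by
    rw [zpow_neg_one, ← h, ← zpow_natCast ((p:ℝ) ^ (-(w.valuation : ℤ))) 2, ← zpow_mul]
    norm_num
  have := zpow_right_injective₀ (by positivity) (ne_of_gt hp1) this
  omega

end Aux

lemma key2 (t w : ℤ_[2]) : w ^ 2 ≠ 2 * (1 + t + t ^ 2) := by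
  intro h
  have h1 : ‖(1 + t + t ^ 2 : ℤ_[2])‖ = 1 := by
    apply aux_norm_one
    have : PadicInt.toZMod (1 + t + t ^ 2) = 1 + PadicInt.toZMod t + (PadicInt.toZMod t) ^ 2 := by
      push_cast [map_add, map_one, map_pow]; ring
    rw [this]
    have hall : ∀ b : ZMod 2, 1 + b + b ^ 2 ≠ 0 := by decide
    exact hall _
  have h2 : ‖(2 : ℤ_[2])‖ = ((2 : ℝ))⁻¹ := by
    have := @PadicInt.norm_p 2 _
    exact_mod_cast this
  apply aux_parity (p := 2) (w := w)
  calc ‖w‖ ^ 2 = ‖w ^ 2‖ := (norm_pow w 2).symm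
    _ = ‖(2 : ℤ_[2])‖ * ‖(1 + t + t ^ 2 : ℤ_[2])‖ := by rw [h, norm_mul]
    _ = ((2 : ℝ))⁻¹ := by rw [h1, h2, mul_one]

lemma key3 (t w : ℤ_[3]) : w ^ 2 ≠ 2 * (1 + t + t ^ 2) := by
  intro h
  have h2 : ‖(2 : ℤ_[3])‖ = 1 := by
    apply aux_norm_one
    have : PadicInt.toZMod (2 : ℤ_[3]) = (2 : ZMod 3) := by
      rw [show (2 : ℤ_[3]) = 1 + 1 by norm_num, map_add, map_one]; decide
    rw [this]; decide
  by_cases hb : PadicInt.toZMod t = 1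
  · -- t ≡ 1 mod 3
    have : PadicInt.toZMod (t - 1) = 0 := by rw [map_sub, map_one, hb, sub_self]
    obtain ⟨s, hs⟩ := aux_dvd this
    have ht : t = 1 + 3 * s := by push_cast at hs; linear_combination hs
    have hfac : (1 + t + t ^ 2 : ℤ_[3]) = 3 * (1 + 3 * s + 3 * s ^ 2) := by
      rw [ht]; ring
    have hc : ‖(1 + 3 * s + 3 * s ^ 2 : ℤ_[3])‖ = 1 := by
      apply aux_norm_one
      have : PadicInt.toZMod (1 + 3 * s + 3 * s ^ 2 : ℤ_[3])
          = 1 + 3 * PadicInt.toZMod s + 3 * (PadicInt.toZMod s) ^ 2 := by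
        push_cast [map_add, map_one, map_mul, map_pow, map_ofNat]; ring
      rw [this]
      have h3 : (3 : ZMod 3) = 0 := by decide
      rw [h3]; simp
    have h3n : ‖(3 : ℤ_[3])‖ = ((3 : ℝ))⁻¹ := by
      have := @PadicInt.norm_p 3 _
      exact_mod_cast this
    apply aux_parity (p := 3) (w := w)
    calc ‖w‖ ^ 2 = ‖w ^ 2‖ := (norm_pow w 2).symm
      _ = ‖(2 : ℤ_[3])‖ * (‖(3 : ℤ_[3])‖ * ‖(1 + 3 * s + 3 * s ^ 2 : ℤ_[3])‖) := by
          rw [h, hfac, norm_mul, norm_mul]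
      _ = ((3 : ℝ))⁻¹ := by rw [h2, hc, h3n, one_mul, mul_one]
  · -- 1 + t + t² is a unit
    have h1 : ‖(1 + t + t ^ 2 : ℤ_[3])‖ = 1 := by
      apply aux_norm_one
      have : PadicInt.toZMod (1 + t + t ^ 2) = 1 + PadicInt.toZMod t + (PadicInt.toZMod t) ^ 2 := by
        push_cast [map_add, map_one, map_pow]; ring
      rw [this]
      revert hb
      generalize PadicInt.toZMod t = b
      revert b; decide
    have hw : ‖w‖ = 1 := by
      have hsq : ‖w‖ ^ 2 = 1 := by
        calc ‖w‖ ^ 2 = ‖w ^ 2‖ := (norm_pow w 2).symm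
          _ = ‖(2 : ℤ_[3])‖ * ‖(1 + t + t ^ 2 : ℤ_[3])‖ := by rw [h, norm_mul]
          _ = 1 := by rw [h1, h2, one_mul]
      nlinarith [norm_nonneg w]
    have hw0 : PadicInt.toZMod w ≠ 0 := by
      intro h0
      obtain ⟨s, hs⟩ := aux_dvd h0
      have : ‖w‖ < 1 := by
        rw [PadicInt.norm_lt_one_iff_dvd]; exact ⟨s, hs⟩
      linarith
    have heq : (PadicInt.toZMod w) ^ 2
        = 2 * (1 + PadicInt.toZMod t + (PadicInt.toZMod t) ^ 2) := by
      have := congrArg PadicInt.toZMod h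
      push_cast [map_mul, map_add, map_one, map_pow, map_ofNat] at this
      convert this using 2
    revert hb hw0 heq
    generalize PadicInt.toZMod t = b
    generalize PadicInt.toZMod w = a
    revert a b; decide

lemma padic_case (p : ℕ) [Fact p.Prime]
    (key : ∀ t w : ℤ_[p], w ^ 2 ≠ 2 * (1 + t + t ^ 2))
    (l m u : ℚ_[p]) (hne : (l, m, u) ≠ (0, 0, 0)) :
    u ^ 2 ≠ 2 * (l ^ 2 + l * m + m ^ 2) := by
  intro h
  -- first, (l, m) ≠ (0, 0)
  have hlm : l ≠ 0 ∨ m ≠ 0 := by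
    by_contra hc
    push_neg at hc
    obtain ⟨rfl, rfl⟩ := hc
    have : u ^ 2 = 0 := by rw [h]; ring
    have : u = 0 := by
      exact pow_eq_zero_iff (n := 2) (by norm_num) |>.mp this
    exact hne (by simp [this])
  -- wlog ‖m‖ ≤ ‖l‖ by symmetry
  wlog hml : ‖m‖ ≤ ‖l‖ with H
  · refine H p key m l u ?_ (by rw [h]; ring) hlm.symm (le_of_not_ge hml)
    intro hc
    rw [Prod.mk.injEq, Prod.mk.injEq] at hc
    exact hne (by rw [Prod.mk.injEq, Prod.mk.injEq]; tauto)
  have hl : l ≠ 0 := by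
    rcases hlm with h' | h'
    · exact h'
    · intro h0; rw [h0] at hml; simp at hml; exact h' hml
  set t : ℚ_[p] := m / l with htdef
  set w : ℚ_[p] := u / l with hwdef
  have ht1 : ‖t‖ ≤ 1 := by
    rw [htdef, norm_div]
    exact div_le_one_of_le₀ hml (norm_nonneg l)
  have e1 : t * l = m := div_mul_cancel₀ m hl
  have e2 : w * l = u := div_mul_cancel₀ u hl
  have heq : w ^ 2 = 2 * (1 + t + t ^ 2) := by
    have key' : w ^ 2 * l ^ 2 = 2 * (1 + t + t ^ 2) * l ^ 2 := by
      calc w ^ 2 * l ^ 2 = (w * l) ^ 2 := by ring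
        _ = u ^ 2 := by rw [e2]
        _ = 2 * (l ^ 2 + l * (t * l) + (t * l) ^ 2) := by rw [e1]; exact h
        _ = 2 * (1 + t + t ^ 2) * l ^ 2 := by ring
    exact mul_right_cancel₀ (pow_ne_zero 2 hl) key'
  have hw1 : ‖w‖ ≤ 1 := by
    by_contra hc
    push_neg at hc
    have h2 : ‖(2 : ℚ_[p])‖ ≤ 1 := by
      have := Padic.norm_int_le_one (p := p) 2
      exact_mod_cast this
    have hsum : ‖(1 + t + t ^ 2 : ℚ_[p])‖ ≤ 1 := by
      refine le_trans (Padic.nonarchimedean _ _) ?_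
      refine max_le (le_trans (Padic.nonarchimedean _ _) (max_le (by simp) ht1)) ?_
      rw [norm_pow]
      exact pow_le_one₀ (norm_nonneg t) ht1
    have : ‖w ^ 2‖ ≤ 1 := by
      rw [heq, norm_mul]
      exact mul_le_one₀ h2 (norm_nonneg _) hsum
    rw [norm_pow] at this
    nlinarith
  set T : ℤ_[p] := ⟨t, ht1⟩ with hT
  set W : ℤ_[p] := ⟨w, hw1⟩ with hW
  apply key T W
  have : ((W ^ 2 : ℤ_[p]) : ℚ_[p]) = ((2 * (1 + T + T ^ 2) : ℤ_[p]) : ℚ_[p]) := by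
    push_cast
    exact heq
  exact Subtype.coe_injective this

/-- The conic `u² = 2(λ² + λμ + μ²)` has no nontrivial rational points;
indeed it has no nontrivial points over `ℚ_2` nor over `ℚ_3`. -/
theorem conic_no_rational_points [Fact (Nat.Prime 2)] [Fact (Nat.Prime 3)] :
    (∀ l m u : ℚ, (l, m, u) ≠ (0, 0, 0) → u ^ 2 ≠ 2 * (l ^ 2 + l * m + m ^ 2)) ∧
    (∀ l m u : ℚ_[2], (l, m, u) ≠ (0, 0, 0) → u ^ 2 ≠ 2 * (l ^ 2 + l * m + m ^ 2)) ∧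
    (∀ l m u : ℚ_[3], (l, m, u) ≠ (0, 0, 0) → u ^ 2 ≠ 2 * (l ^ 2 + l * m + m ^ 2)) := by
  have h2 : ∀ l m u : ℚ_[2], (l, m, u) ≠ (0, 0, 0) → u ^ 2 ≠ 2 * (l ^ 2 + l * m + m ^ 2) :=
    padic_case 2 key2
  have h3 : ∀ l m u : ℚ_[3], (l, m, u) ≠ (0, 0, 0) → u ^ 2 ≠ 2 * (l ^ 2 + l * m + m ^ 2) :=
    padic_case 3 key3
  refine ⟨fun l m u hne h => ?_, h2, h3⟩
  apply h2 (l : ℚ_[2]) (m : ℚ_[2]) (u : ℚ_[2])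
  · intro hc
    apply hne
    rw [Prod.mk.injEq, Prod.mk.injEq] at hc ⊢
    obtain ⟨c1, c2, c3⟩ := hc
    exact ⟨by exact_mod_cast c1, by exact_mod_cast c2, by exact_mod_cast c3⟩
  · exact_mod_cast h
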